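/- O(1/√k) convergence rate of the conjugate-based algorithm (Theorem 2(ii)): under the same setting, fix a horizon k ≥ 1, a point (x⋄, σ⋄) ∈ Ω × B, and d̄ > 0 with ‖(x[1], σ[1]) − (x⋄, σ⋄)‖² ≤ 2 d̄. If the constant step sizes α_j = √(2 d̄)/(M₂ √k) are used for j = 1, …, k, then the weighted averages x̂[k] = (Σ_{j=1}^k α_j x[j])/(Σ_{j=1}^k α_j) and σ̂[k] = (Σ_{j=1}^k α_j σ[j])/(Σ_{j=1}^k α_j) satisfy Γ(x̂[k], σ⋄) − Γ(x⋄, σ̂[k]) ≤ √(2 d̄) · M₂ / √k. -/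

import Mathlib

open scoped BigOperators RealInnerProductSpace
set_option maxHeartbeats 1600000

lemma aux_clamp_sq_le (W s t : ℝ) (hs0 : 0 ≤ s) (hsW : s ≤ W) :
    (max 0 (min W t) - s) ^ 2 ≤ (t - s) ^ 2 := by
  rcases le_total t 0 with h0 | h0
  · rw [min_eq_right (le_trans h0 (le_trans hs0 hsW)), max_eq_left h0]; nlinarith
  · rcases le_total t W with h1 | h1
    · rw [min_eq_right h1, max_eq_right h0]
    · rw [min_eq_left h1, max_eq_right (le_trans hs0 hsW)]; nlinarith

lemma aux_proj_sq_le {F : Type*} [NormedAddCommGroup F] [InnerProductSpace ℝ F]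
    {K : Set F} (hK : Convex ℝ K) {u p y : F} (hp : p ∈ K) (hy : y ∈ K)
    (hmin : ∀ w ∈ K, ‖u - p‖ ≤ ‖u - w‖) : ‖p - y‖ ^ 2 ≤ ‖u - y‖ ^ 2 := by
  have heq : ‖u - p‖ = ⨅ w : K, ‖u - w‖ := by
    haveI : Nonempty K := ⟨⟨p, hp⟩⟩
    refine le_antisymm (le_ciInf fun w => hmin w w.2) ?_
    exact ciInf_le ⟨0, fun _ ⟨w, h⟩ => h ▸ norm_nonneg _⟩ (⟨p, hp⟩ : K)
  have hvi : ⟪u - p, y - p⟫ ≤ 0 :=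
    (norm_eq_iInf_iff_real_inner_le_zero hK hp).1 heq y hy
  have hid : ‖u - y‖ ^ 2 = ‖u - p‖ ^ 2 + 2 * ⟪u - p, p - y⟫ + ‖p - y‖ ^ 2 := by
    have : u - y = (u - p) + (p - y) := by abel
    rw [this, norm_add_sq_real]
  have h2 : ⟪u - p, p - y⟫ = - ⟪u - p, y - p⟫ := by
    rw [← inner_neg_right]; congr 1; abel
  nlinarith [sq_nonneg ‖u - p‖]

lemma aux_normsq_avg {F : Type*} [SeminormedAddCommGroup F] [NormedSpace ℝ F]
    {ι : Type*} (s : Finset ι) (w : ι → ℝ) (v : ι → F)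
    (hw : ∀ i ∈ s, 0 ≤ w i) (hw1 : ∑ i ∈ s, w i = 1) :
    ‖∑ i ∈ s, w i • v i‖ ^ 2 ≤ ∑ i ∈ s, w i * ‖v i‖ ^ 2 := by
  have h1 : ‖∑ i ∈ s, w i • v i‖ ≤ ∑ i ∈ s, w i * ‖v i‖ := by
    refine (norm_sum_le _ _).trans (le_of_eq ?_)
    refine Finset.sum_congr rfl fun i hi => ?_
    rw [norm_smul, Real.norm_eq_abs, abs_of_nonneg (hw i hi)]
  have h2 : (∑ i ∈ s, w i * ‖v i‖) ^ 2 ≤ ∑ i ∈ s, w i * ‖v i‖ ^ 2 := by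
    have := Finset.sum_mul_sq_le_sq_mul_sq s (fun i => Real.sqrt (w i))
      (fun i => Real.sqrt (w i) * ‖v i‖)
    have e1 : ∀ i ∈ s, Real.sqrt (w i) * (Real.sqrt (w i) * ‖v i‖) = w i * ‖v i‖ := by
      intro i hi; rw [← mul_assoc, Real.mul_self_sqrt (hw i hi)]
    have e2 : ∀ i ∈ s, Real.sqrt (w i) ^ 2 = w i := fun i hi => Real.sq_sqrt (hw i hi)
    have e3 : ∀ i ∈ s, (Real.sqrt (w i) * ‖v i‖) ^ 2 = w i * ‖v i‖ ^ 2 := by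
      intro i hi; rw [mul_pow, Real.sq_sqrt (hw i hi)]
    rw [Finset.sum_congr rfl e1, Finset.sum_congr rfl e2, Finset.sum_congr rfl e3, hw1,
      one_mul] at this
    exact this
  have hnn : (0:ℝ) ≤ ∑ i ∈ s, w i * ‖v i‖ :=
    Finset.sum_nonneg fun i hi => mul_nonneg (hw i hi) (norm_nonneg _)
  nlinarith [norm_nonneg (∑ i ∈ s, w i • v i)]

lemma aux_sq_avg {ι : Type*} (s : Finset ι) (w : ι → ℝ) (v : ι → ℝ)
    (hw : ∀ i ∈ s, 0 ≤ w i) (hw1 : ∑ i ∈ s, w i = 1) :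
    (∑ i ∈ s, w i * v i) ^ 2 ≤ ∑ i ∈ s, w i * v i ^ 2 := by
  have := Finset.sum_mul_sq_le_sq_mul_sq s (fun i => Real.sqrt (w i))
    (fun i => Real.sqrt (w i) * v i)
  have e1 : ∀ i ∈ s, Real.sqrt (w i) * (Real.sqrt (w i) * v i) = w i * v i := by
    intro i hi; rw [← mul_assoc, Real.mul_self_sqrt (hw i hi)]
  have e3 : ∀ i ∈ s, (Real.sqrt (w i) * v i) ^ 2 = w i * v i ^ 2 := by
    intro i hi; rw [mul_pow, Real.sq_sqrt (hw i hi)]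
  rw [Finset.sum_congr rfl e1, Finset.sum_congr rfl (fun i hi => Real.sq_sqrt (hw i hi)),
    Finset.sum_congr rfl e3, hw1, one_mul] at this
  exact this


lemma aux_cvx {F : Type*} [NormedAddCommGroup F] [InnerProductSpace ℝ F]
    (σ : ℝ) (hσ : 0 ≤ σ) (u v : F) :
    σ * ‖u‖ ^ 2 ≤ σ * ‖v‖ ^ 2 + 2 * σ * ⟪u, u - v⟫ := by
  have h1 := norm_sub_sq_real u v
  have h2 : ⟪u, u - v⟫ = ‖u‖ ^ 2 - ⟪u, v⟫ := by
    rw [inner_sub_right, real_inner_self_eq_norm_sq]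
  nlinarith [mul_nonneg hσ (sq_nonneg ‖u - v‖)]


lemma aux_lin {ι : Type*} (s : Finset ι) (w f : ι → ℝ) (hw1 : ∑ i ∈ s, w i = 1)
    (c dd cc : ℝ) :
    ∑ i ∈ s, w i * (c * (f i - dd) - cc) = c * (∑ i ∈ s, w i * f i) - c * dd - cc := by
  have h : ∀ i ∈ s, w i * (c * (f i - dd) - cc) = c * (w i * f i) - (c * dd + cc) * w i :=
    fun i _ => by ring
  rw [Finset.sum_congr rfl h, Finset.sum_sub_distrib, ← Finset.mul_sum, ← Finset.mul_sum, hw1]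
  ring

lemma aux_conc {ι : Type*} (s : Finset ι) (w σ : ι → ℝ) (hw : ∀ i ∈ s, 0 ≤ w i)
    (hw1 : ∑ i ∈ s, w i = 1) (c : ℝ) :
    ∑ i ∈ s, w i * (σ i * c - σ i ^ 2 / 4)
      ≤ (∑ i ∈ s, w i * σ i) * c - (∑ i ∈ s, w i * σ i) ^ 2 / 4 := by
  have h1 : ∑ i ∈ s, w i * (σ i * c - σ i ^ 2 / 4)
      = (∑ i ∈ s, w i * σ i) * c - (∑ i ∈ s, w i * σ i ^ 2) / 4 := by
    have h : ∀ i ∈ s, w i * (σ i * c - σ i ^ 2 / 4)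
        = (w i * σ i) * c - (w i * σ i ^ 2) / 4 := fun i _ => by ring
    rw [Finset.sum_congr rfl h, Finset.sum_sub_distrib, ← Finset.sum_mul, ← Finset.sum_div]
  rw [h1]
  have h2 := aux_sq_avg s w σ hw hw1
  linarith


/-- O(1/√k) convergence rate of the conjugate-based algorithm
(Theorem 2(ii)) under constant step sizes `α_j = √(2 d̄)/(M₂ √k)`. -/
theorem stmt_13
    (n : ℕ) (hn : 1 ≤ n)
    (S A : Type) [Fintype S] [DecidableEq S] [Fintype A] [DecidableEq A]
    (a : A → EuclideanSpace ℝ (Fin n))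
    (Ess : Finset (S × S))
    (hsym : ∀ i j : S, (i, j) ∈ Ess → (j, i) ∈ Ess)
    (hirr : ∀ i : S, (i, i) ∉ Ess)
    (U : Finset (S × S)) (hUsub : U ⊆ Ess)
    (hUone : ∀ i j : S, (i, j) ∈ Ess → ((i, j) ∈ U ↔ (j, i) ∉ U))
    (Eas : Finset (S × A))
    (d : S → S → ℝ) (hd : ∀ i j, d i j = d j i)
    (e : S → A → ℝ)
    -- the complementary function
    (Γ : (S → EuclideanSpace ℝ (Fin n)) → (S × S → ℝ) → (S × A → ℝ) → ℝ)
    (hΓ : ∀ x σs σa, Γ x σs σa =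
      (∑ p ∈ U, (σs p * (‖x p.1 - x p.2‖ ^ 2 - d p.1 p.2 ^ 2) - σs p ^ 2 / 4))
        + ∑ q ∈ Eas,
            (σa q * (‖x q.1 - a q.2‖ ^ 2 - e q.1 q.2 ^ 2) - σa q ^ 2 / 4))
    -- the partial gradients of Γ
    (Gx : (S → EuclideanSpace ℝ (Fin n)) → (S × S → ℝ) → (S × A → ℝ) →
      S → EuclideanSpace ℝ (Fin n))
    (hGx : ∀ x σs σa i, Gx x σs σa i =
      (∑ j ∈ Finset.univ.filter (fun j => (i, j) ∈ Ess),
        (2 * (if (i, j) ∈ U then σs (i, j) else σs (j, i))) • (x i - x j))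
        + ∑ l ∈ Finset.univ.filter (fun l => (i, l) ∈ Eas),
            (2 * σa (i, l)) • (x i - a l))
    (Gs : (S → EuclideanSpace ℝ (Fin n)) → (S × S → ℝ) → S × S → ℝ)
    (hGs : ∀ x σs p, Gs x σs p = (‖x p.1 - x p.2‖ ^ 2 - d p.1 p.2 ^ 2) - σs p / 2)
    (Ga : (S → EuclideanSpace ℝ (Fin n)) → (S × A → ℝ) → S × A → ℝ)
    (hGa : ∀ x σa q, Ga x σa q = (‖x q.1 - a q.2‖ ^ 2 - e q.1 q.2 ^ 2) - σa q / 2)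
    -- strategy sets and the dual box
    (Ω : S → Set (EuclideanSpace ℝ (Fin n)))
    (hΩne : ∀ i, (Ω i).Nonempty) (hΩcv : ∀ i, Convex ℝ (Ω i))
    (hΩcp : ∀ i, IsCompact (Ω i))
    (W : ℝ) (hW : 0 < W)
    -- metric projections onto the strategy sets
    (projΩ : S → EuclideanSpace ℝ (Fin n) → EuclideanSpace ℝ (Fin n))
    (hproj : ∀ i u, projΩ i u ∈ Ω i ∧ ∀ w ∈ Ω i, ‖u - projΩ i u‖ ≤ ‖u - w‖)
    -- step sizes and gradient bound
    (α : ℕ → ℝ) (hα : ∀ j, 0 < α j)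
    (M₂ : ℝ) (hM₂pos : 0 < M₂)
    (hM₂ : ∀ (x : S → EuclideanSpace ℝ (Fin n)) (σs : S × S → ℝ) (σa : S × A → ℝ),
      (∀ i, x i ∈ Ω i) → (∀ p ∈ U, σs p ∈ Set.Icc (0 : ℝ) W) →
      (∀ q ∈ Eas, σa q ∈ Set.Icc (0 : ℝ) W) →
      (∑ i : S, ‖Gx x σs σa i‖ ^ 2) + (∑ p ∈ U, Gs x σs p ^ 2)
        + (∑ q ∈ Eas, Ga x σa q ^ 2) ≤ M₂ ^ 2)
    -- the iterates
    (x : ℕ → S → EuclideanSpace ℝ (Fin n))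
    (σs : ℕ → S × S → ℝ) (σa : ℕ → S × A → ℝ)
    (hx1 : ∀ i, x 1 i ∈ Ω i)
    (hσs1 : ∀ p ∈ U, σs 1 p ∈ Set.Icc (0 : ℝ) W)
    (hσa1 : ∀ q ∈ Eas, σa 1 q ∈ Set.Icc (0 : ℝ) W)
    (hxup : ∀ k, 1 ≤ k → ∀ i,
      x (k + 1) i = projΩ i (x k i - α k • Gx (x k) (σs k) (σa k) i))
    (hσsup : ∀ k, 1 ≤ k → ∀ p ∈ U,
      σs (k + 1) p = max 0 (min W (σs k p + α k * Gs (x k) (σs k) p)))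
    (hσaup : ∀ k, 1 ≤ k → ∀ q ∈ Eas,
      σa (k + 1) q = max 0 (min W (σa k q + α k * Ga (x k) (σa k) q)))
    -- the horizon, comparison point, and constant step sizes
    (k : ℕ) (hk : 1 ≤ k)
    (xd : S → EuclideanSpace ℝ (Fin n)) (σsd : S × S → ℝ) (σad : S × A → ℝ)
    (hxdΩ : ∀ i, xd i ∈ Ω i)
    (hσsdB : ∀ p ∈ U, σsd p ∈ Set.Icc (0 : ℝ) W)
    (hσadB : ∀ q ∈ Eas, σad q ∈ Set.Icc (0 : ℝ) W)
    (dbar : ℝ) (hdbar : 0 < dbar)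
    (hdist : (∑ i : S, ‖x 1 i - xd i‖ ^ 2) + (∑ p ∈ U, (σs 1 p - σsd p) ^ 2)
      + (∑ q ∈ Eas, (σa 1 q - σad q) ^ 2) ≤ 2 * dbar)
    (hstep : ∀ j ∈ Finset.Icc 1 k,
      α j = Real.sqrt (2 * dbar) / (M₂ * Real.sqrt k)) :
    -- conclusion: O(1/√k) duality-gap bound at the weighted averages
    Γ (fun i => (∑ j ∈ Finset.Icc 1 k, α j)⁻¹ • ∑ j ∈ Finset.Icc 1 k, α j • x j i)
        σsd σad
      - Γ xd
          (fun p => (∑ j ∈ Finset.Icc 1 k, α j * σs j p) / ∑ j ∈ Finset.Icc 1 k, α j)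
          (fun q => (∑ j ∈ Finset.Icc 1 k, α j * σa j q) / ∑ j ∈ Finset.Icc 1 k, α j)
    ≤ Real.sqrt (2 * dbar) * M₂ / Real.sqrt k := by
  classical
  -- Basic positivity facts
  have hW0 : (0:ℝ) ≤ W := hW.le
  set Φ : ℕ → ℝ := fun j =>
    (∑ i : S, ⟪Gx (x j) (σs j) (σa j) i, x j i - xd i⟫)
    - (∑ p ∈ U, Gs (x j) (σs j) p * (σs j p - σsd p))
    - (∑ q ∈ Eas, Ga (x j) (σa j) q * (σa j q - σad q)) with hΦdef
  set D : ℕ → ℝ := fun j =>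
    (∑ i : S, ‖x j i - xd i‖ ^ 2) + (∑ p ∈ U, (σs j p - σsd p) ^ 2)
      + (∑ q ∈ Eas, (σa j q - σad q) ^ 2) with hDdef
  -- feasibility of the iterates
  have feas : ∀ j, 1 ≤ j → (∀ i, x j i ∈ Ω i) ∧ (∀ p ∈ U, σs j p ∈ Set.Icc (0:ℝ) W)
      ∧ (∀ q ∈ Eas, σa j q ∈ Set.Icc (0:ℝ) W) := by
    intro j hj
    induction j, hj using Nat.le_induction with
    | base => exact ⟨hx1, hσs1, hσa1⟩
    | succ m hm ih =>
      refine ⟨fun i => ?_, fun p hp => ?_, fun q hq => ?_⟩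
      · rw [hxup m hm i]; exact (hproj i _).1
      · rw [hσsup m hm p hp]
        exact ⟨le_max_left _ _, max_le hW0 (min_le_left _ _)⟩
      · rw [hσaup m hm q hq]
        exact ⟨le_max_left _ _, max_le hW0 (min_le_left _ _)⟩
  -- one-step descent estimate
  have step : ∀ j, 1 ≤ j → D (j+1) ≤ D j - 2 * α j * Φ j + (α j)^2 * M₂^2 := by
    intro j hj
    obtain ⟨hxf, hσsf, hσaf⟩ := feas j hj
    have hxpart : ∀ i : S, ‖x (j+1) i - xd i‖^2 ≤
        ‖x j i - xd i‖^2 - 2 * α j * ⟪Gx (x j) (σs j) (σa j) i, x j i - xd i⟫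
          + (α j)^2 * ‖Gx (x j) (σs j) (σa j) i‖^2 := by
      intro i
      have hle : ‖x (j+1) i - xd i‖^2 ≤ ‖(x j i - α j • Gx (x j) (σs j) (σa j) i) - xd i‖^2 := by
        rw [hxup j hj i]
        exact aux_proj_sq_le (hΩcv i) (hproj i _).1 (hxdΩ i) (fun w hw => (hproj i _).2 w hw)
      refine hle.trans (le_of_eq ?_)
      have h1 : (x j i - α j • Gx (x j) (σs j) (σa j) i) - xd i
          = (x j i - xd i) - α j • Gx (x j) (σs j) (σa j) i := by abel
      rw [h1, norm_sub_sq_real, real_inner_smul_right,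
        real_inner_comm (x j i - xd i) (Gx (x j) (σs j) (σa j) i),
        norm_smul, Real.norm_eq_abs, mul_pow, sq_abs]
      ring
    have hσspart : ∀ p ∈ U, (σs (j+1) p - σsd p)^2 ≤
        (σs j p - σsd p)^2 + 2 * α j * (Gs (x j) (σs j) p * (σs j p - σsd p))
          + (α j)^2 * (Gs (x j) (σs j) p)^2 := by
      intro p hp
      rw [hσsup j hj p hp]
      obtain ⟨h0, h1⟩ := hσsdB p hp
      refine (aux_clamp_sq_le W (σsd p) _ h0 h1).trans (le_of_eq ?_)
      ring
    have hσapart : ∀ q ∈ Eas, (σa (j+1) q - σad q)^2 ≤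
        (σa j q - σad q)^2 + 2 * α j * (Ga (x j) (σa j) q * (σa j q - σad q))
          + (α j)^2 * (Ga (x j) (σa j) q)^2 := by
      intro q hq
      rw [hσaup j hj q hq]
      obtain ⟨h0, h1⟩ := hσadB q hq
      refine (aux_clamp_sq_le W (σad q) _ h0 h1).trans (le_of_eq ?_)
      ring
    have hb := hM₂ (x j) (σs j) (σa j) hxf hσsf hσaf
    have hsum1 : ∑ i : S, ‖x (j+1) i - xd i‖^2 ≤ (∑ i : S, ‖x j i - xd i‖^2)
        - 2 * α j * (∑ i : S, ⟪Gx (x j) (σs j) (σa j) i, x j i - xd i⟫)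
        + (α j)^2 * (∑ i : S, ‖Gx (x j) (σs j) (σa j) i‖^2) := by
      calc ∑ i : S, ‖x (j+1) i - xd i‖^2
          ≤ ∑ i : S, (‖x j i - xd i‖^2
              - 2 * α j * ⟪Gx (x j) (σs j) (σa j) i, x j i - xd i⟫
              + (α j)^2 * ‖Gx (x j) (σs j) (σa j) i‖^2) :=
            Finset.sum_le_sum fun i _ => hxpart i
        _ = _ := by
            rw [Finset.sum_add_distrib, Finset.sum_sub_distrib, ← Finset.mul_sum,
              ← Finset.mul_sum]
    have hsum2 : ∑ p ∈ U, (σs (j+1) p - σsd p)^2 ≤ (∑ p ∈ U, (σs j p - σsd p)^2)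
        + 2 * α j * (∑ p ∈ U, Gs (x j) (σs j) p * (σs j p - σsd p))
        + (α j)^2 * (∑ p ∈ U, (Gs (x j) (σs j) p)^2) := by
      calc ∑ p ∈ U, (σs (j+1) p - σsd p)^2
          ≤ ∑ p ∈ U, ((σs j p - σsd p)^2
              + 2 * α j * (Gs (x j) (σs j) p * (σs j p - σsd p))
              + (α j)^2 * (Gs (x j) (σs j) p)^2) :=
            Finset.sum_le_sum hσspart
        _ = _ := by
            rw [Finset.sum_add_distrib, Finset.sum_add_distrib, ← Finset.mul_sum,
              ← Finset.mul_sum]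
    have hsum3 : ∑ q ∈ Eas, (σa (j+1) q - σad q)^2 ≤ (∑ q ∈ Eas, (σa j q - σad q)^2)
        + 2 * α j * (∑ q ∈ Eas, Ga (x j) (σa j) q * (σa j q - σad q))
        + (α j)^2 * (∑ q ∈ Eas, (Ga (x j) (σa j) q)^2) := by
      calc ∑ q ∈ Eas, (σa (j+1) q - σad q)^2
          ≤ ∑ q ∈ Eas, ((σa j q - σad q)^2
              + 2 * α j * (Ga (x j) (σa j) q * (σa j q - σad q))
              + (α j)^2 * (Ga (x j) (σa j) q)^2) :=
            Finset.sum_le_sum hσapart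
        _ = _ := by
            rw [Finset.sum_add_distrib, Finset.sum_add_distrib, ← Finset.mul_sum,
              ← Finset.mul_sum]
    have hfin : (α j)^2 * ((∑ i : S, ‖Gx (x j) (σs j) (σa j) i‖^2)
        + (∑ p ∈ U, (Gs (x j) (σs j) p)^2) + (∑ q ∈ Eas, (Ga (x j) (σa j) q)^2))
        ≤ (α j)^2 * M₂^2 := mul_le_mul_of_nonneg_left hb (sq_nonneg _)
    simp only [hDdef, hΦdef]
    nlinarith [hsum1, hsum2, hsum3, hfin]
  -- the duality gap is controlled by Φ
  have gapΦ : ∀ j, 1 ≤ j →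
      Γ (x j) σsd σad - Γ xd (σs j) (σa j) ≤ Φ j := by
    intro j hj
    obtain ⟨hxf, hσsf, hσaf⟩ := feas j hj
    have partA : Γ (x j) σsd σad - Γ (x j) (σs j) (σa j) ≤
        - (∑ p ∈ U, Gs (x j) (σs j) p * (σs j p - σsd p))
        - (∑ q ∈ Eas, Ga (x j) (σa j) q * (σa j q - σad q)) := by
      have hU1 : ∀ p ∈ U, σsd p * (‖x j p.1 - x j p.2‖ ^ 2 - d p.1 p.2 ^ 2) - σsd p ^ 2 / 4
          ≤ (σs j p * (‖x j p.1 - x j p.2‖ ^ 2 - d p.1 p.2 ^ 2) - σs j p ^ 2 / 4)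
            - Gs (x j) (σs j) p * (σs j p - σsd p) := by
        intro p hp
        rw [hGs]
        nlinarith [sq_nonneg (σs j p - σsd p)]
      have hE1 : ∀ q ∈ Eas, σad q * (‖x j q.1 - a q.2‖ ^ 2 - e q.1 q.2 ^ 2) - σad q ^ 2 / 4
          ≤ (σa j q * (‖x j q.1 - a q.2‖ ^ 2 - e q.1 q.2 ^ 2) - σa j q ^ 2 / 4)
            - Ga (x j) (σa j) q * (σa j q - σad q) := by
        intro q hq
        rw [hGa]
        nlinarith [sq_nonneg (σa j q - σad q)]
      have hsU : (∑ p ∈ U, (σsd p * (‖x j p.1 - x j p.2‖ ^ 2 - d p.1 p.2 ^ 2) - σsd p ^ 2 / 4))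
          ≤ (∑ p ∈ U, (σs j p * (‖x j p.1 - x j p.2‖ ^ 2 - d p.1 p.2 ^ 2) - σs j p ^ 2 / 4))
            - ∑ p ∈ U, Gs (x j) (σs j) p * (σs j p - σsd p) := by
        rw [← Finset.sum_sub_distrib]
        exact Finset.sum_le_sum hU1
      have hsE : (∑ q ∈ Eas, (σad q * (‖x j q.1 - a q.2‖ ^ 2 - e q.1 q.2 ^ 2) - σad q ^ 2 / 4))
          ≤ (∑ q ∈ Eas, (σa j q * (‖x j q.1 - a q.2‖ ^ 2 - e q.1 q.2 ^ 2) - σa j q ^ 2 / 4))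
            - ∑ q ∈ Eas, Ga (x j) (σa j) q * (σa j q - σad q) := by
        rw [← Finset.sum_sub_distrib]
        exact Finset.sum_le_sum hE1
      rw [hΓ, hΓ]
      linarith
    have hEssEq : Ess = U ∪ U.image Prod.swap := by
      ext p
      simp only [Finset.mem_union, Finset.mem_image]
      constructor
      · intro hp
        by_cases h : p ∈ U
        · exact Or.inl h
        · exact Or.inr ⟨p.swap, not_not.1 (fun hns => h ((hUone p.1 p.2 hp).2 hns)),
            Prod.swap_swap p⟩
      · rintro (h | ⟨q, hq, rfl⟩)
        · exact hUsub h
        · exact hsym q.1 q.2 (hUsub hq)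
    have hdisj : Disjoint U (U.image Prod.swap) := by
      rw [Finset.disjoint_left]
      intro p hp hp2
      obtain ⟨q, hq, hqe⟩ := Finset.mem_image.1 hp2
      have hnot : (p.2, p.1) ∉ U := (hUone p.1 p.2 (hUsub hp)).1 hp
      apply hnot
      have : q = (p.2, p.1) := by
        have := congrArg Prod.swap hqe
        rwa [Prod.swap_swap] at this
      rwa [this] at hq
    have hinner : ∀ i : S, ⟪Gx (x j) (σs j) (σa j) i, x j i - xd i⟫ =
        (∑ l ∈ Finset.univ.filter (fun l => (i, l) ∈ Ess),
          2 * (if (i, l) ∈ U then σs j (i, l) else σs j (l, i)) * ⟪x j i - x j l, x j i - xd i⟫)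
        + ∑ l ∈ Finset.univ.filter (fun l => (i, l) ∈ Eas),
            2 * σa j (i, l) * ⟪x j i - a l, x j i - xd i⟫ := by
      intro i
      rw [hGx, inner_add_left, sum_inner, sum_inner]
      congr 1 <;> refine Finset.sum_congr rfl fun l hl => ?_ <;>
        rw [real_inner_smul_left]
    have hswap : ∑ i : S, ⟪Gx (x j) (σs j) (σa j) i, x j i - xd i⟫ =
        (∑ p ∈ Ess, 2 * (if (p.1, p.2) ∈ U then σs j (p.1, p.2) else σs j (p.2, p.1))
            * ⟪x j p.1 - x j p.2, x j p.1 - xd p.1⟫)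
        + ∑ q ∈ Eas, 2 * σa j (q.1, q.2) * ⟪x j q.1 - a q.2, x j q.1 - xd q.1⟫ := by
      rw [Finset.sum_congr rfl (fun i (_ : i ∈ Finset.univ) => hinner i),
        Finset.sum_add_distrib]
      congr 1
      · exact (Finset.sum_finset_product' Ess Finset.univ
          (fun i => Finset.univ.filter (fun l => (i, l) ∈ Ess)) (by simp)).symm
      · exact (Finset.sum_finset_product' Eas Finset.univ
          (fun i => Finset.univ.filter (fun l => (i, l) ∈ Eas)) (by simp)).symm
    have hsum2 : (∑ p ∈ Ess, 2 * (if (p.1, p.2) ∈ U then σs j (p.1, p.2) else σs j (p.2, p.1))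
            * ⟪x j p.1 - x j p.2, x j p.1 - xd p.1⟫)
        = ∑ p ∈ U, 2 * σs j p
            * ⟪x j p.1 - x j p.2, (x j p.1 - xd p.1) - (x j p.2 - xd p.2)⟫ := by
      rw [hEssEq, Finset.sum_union hdisj,
        Finset.sum_image (fun q _ q' _ h => Prod.swap_injective h),
        ← Finset.sum_add_distrib]
      refine Finset.sum_congr rfl fun p hp => ?_
      have hnotU : (p.2, p.1) ∉ U := (hUone p.1 p.2 (hUsub hp)).1 hp
      simp only [Prod.fst_swap, Prod.snd_swap]
      rw [if_pos hp, if_neg hnotU]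
      have h1 : x j p.2 - x j p.1 = -(x j p.1 - x j p.2) := by abel
      rw [h1, inner_neg_left]
      simp only [inner_sub_right]
      ring
    have hBU : ∀ p ∈ U, σs j p * (‖x j p.1 - x j p.2‖ ^ 2 - d p.1 p.2 ^ 2) - σs j p ^ 2 / 4
        ≤ (σs j p * (‖xd p.1 - xd p.2‖ ^ 2 - d p.1 p.2 ^ 2) - σs j p ^ 2 / 4)
          + 2 * σs j p * ⟪x j p.1 - x j p.2, (x j p.1 - xd p.1) - (x j p.2 - xd p.2)⟫ := by
      intro p hp
      have key := aux_cvx (σs j p) (hσsf p hp).1 (x j p.1 - x j p.2) (xd p.1 - xd p.2)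
      have hz : (x j p.1 - x j p.2) - (xd p.1 - xd p.2)
          = (x j p.1 - xd p.1) - (x j p.2 - xd p.2) := by abel
      rw [hz] at key
      nlinarith [key]
    have hBE : ∀ q ∈ Eas, σa j q * (‖x j q.1 - a q.2‖ ^ 2 - e q.1 q.2 ^ 2) - σa j q ^ 2 / 4
        ≤ (σa j q * (‖xd q.1 - a q.2‖ ^ 2 - e q.1 q.2 ^ 2) - σa j q ^ 2 / 4)
          + 2 * σa j (q.1, q.2) * ⟪x j q.1 - a q.2, x j q.1 - xd q.1⟫ := by
      intro q hq
      have key := aux_cvx (σa j q) (hσaf q hq).1 (x j q.1 - a q.2) (xd q.1 - a q.2)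
      have hz : (x j q.1 - a q.2) - (xd q.1 - a q.2) = x j q.1 - xd q.1 := by abel
      rw [hz] at key
      nlinarith [key]
    have partB : Γ (x j) (σs j) (σa j) - Γ xd (σs j) (σa j) ≤
        ∑ i : S, ⟪Gx (x j) (σs j) (σa j) i, x j i - xd i⟫ := by
      rw [hswap, hsum2, hΓ, hΓ]
      have hsU := Finset.sum_le_sum hBU
      have hsE := Finset.sum_le_sum hBE
      rw [Finset.sum_add_distrib] at hsU hsE
      linarith
    simp only [hΦdef]
    linarith
  -- telescoping
  have tele : ∀ m : ℕ, (∑ j ∈ Finset.Icc 1 m, 2 * α j * Φ j)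
      ≤ D 1 - D (m+1) + (∑ j ∈ Finset.Icc 1 m, (α j)^2) * M₂^2 := by
    intro m
    induction m with
    | zero => simp
    | succ m ih =>
      rw [Finset.sum_Icc_succ_top (Nat.le_add_left 1 m), Finset.sum_Icc_succ_top (Nat.le_add_left 1 m)]
      have h1 := step (m+1) (Nat.le_add_left 1 m)
      have : (((∑ j ∈ Finset.Icc 1 m, (α j)^2) + (α (m+1))^2) * M₂^2)
          = (∑ j ∈ Finset.Icc 1 m, (α j)^2) * M₂^2 + (α (m+1))^2 * M₂^2 := by ring
      rw [this]
      linarith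
  -- constants
  have hk1 : (1:ℝ) ≤ (k:ℝ) := by exact_mod_cast hk
  have hkpos : (0:ℝ) < (k:ℝ) := lt_of_lt_of_le one_pos hk1
  have hrpos : 0 < Real.sqrt k := Real.sqrt_pos.2 hkpos
  have hr2 : Real.sqrt k ^ 2 = (k:ℝ) := Real.sq_sqrt hkpos.le
  have hspos : 0 < Real.sqrt (2*dbar) := Real.sqrt_pos.2 (by linarith)
  have hs2 : Real.sqrt (2*dbar) ^ 2 = 2*dbar := Real.sq_sqrt (by linarith)
  set α0 : ℝ := Real.sqrt (2*dbar) / (M₂ * Real.sqrt k) with hα0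
  have hα0pos : 0 < α0 := div_pos hspos (mul_pos hM₂pos hrpos)
  set T := ∑ j ∈ Finset.Icc 1 k, α j with hTdef
  have hT : T = (k:ℝ) * α0 := by
    rw [hTdef, Finset.sum_congr rfl (fun j hj => hstep j hj), Finset.sum_const, Nat.card_Icc,
      Nat.add_sub_cancel, nsmul_eq_mul]
  have hTpos : 0 < T := by rw [hT]; positivity
  have hA2 : ∑ j ∈ Finset.Icc 1 k, (α j)^2 = (k:ℝ) * α0^2 := by
    rw [Finset.sum_congr rfl (fun j hj => by rw [hstep j hj]), Finset.sum_const, Nat.card_Icc,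
      Nat.add_sub_cancel, nsmul_eq_mul]
  -- gap sum bound
  have hD1le : D 1 ≤ 2 * dbar := by simp only [hDdef]; exact hdist
  have hDk1 : 0 ≤ D (k+1) := by
    simp only [hDdef]
    have h1 : (0:ℝ) ≤ ∑ i : S, ‖x (k+1) i - xd i‖^2 := Finset.sum_nonneg fun i _ => sq_nonneg _
    have h2 : (0:ℝ) ≤ ∑ p ∈ U, (σs (k+1) p - σsd p)^2 := Finset.sum_nonneg fun p _ => sq_nonneg _
    have h3 : (0:ℝ) ≤ ∑ q ∈ Eas, (σa (k+1) q - σad q)^2 := Finset.sum_nonneg fun q _ => sq_nonneg _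
    linarith
  have htelek := tele k
  rw [hA2] at htelek
  have hgapsum : ∑ j ∈ Finset.Icc 1 k, α j * (Γ (x j) σsd σad - Γ xd (σs j) (σa j))
      ≤ dbar + (k:ℝ) * α0^2 * M₂^2 / 2 := by
    have hg : ∑ j ∈ Finset.Icc 1 k, α j * (Γ (x j) σsd σad - Γ xd (σs j) (σa j))
        ≤ ∑ j ∈ Finset.Icc 1 k, α j * Φ j :=
      Finset.sum_le_sum fun j hj =>
        mul_le_mul_of_nonneg_left (gapΦ j (Finset.mem_Icc.1 hj).1) (hα j).le
    have h2 : ∑ j ∈ Finset.Icc 1 k, α j * Φ j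
        = (∑ j ∈ Finset.Icc 1 k, 2 * α j * Φ j) / 2 := by
      rw [Finset.sum_div]; exact Finset.sum_congr rfl fun j _ => by ring
    linarith
  -- weights
  set w : ℕ → ℝ := fun j => T⁻¹ * α j with hwdef
  have hw0 : ∀ j ∈ Finset.Icc 1 k, 0 ≤ w j := fun j _ =>
    mul_nonneg (inv_nonneg.2 hTpos.le) (hα j).le
  have hw1 : ∑ j ∈ Finset.Icc 1 k, w j = 1 := by
    simp only [hwdef]
    rw [← Finset.mul_sum, ← hTdef, inv_mul_cancel₀ hTpos.ne']
  -- averaged primal point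
  have hdiff : ∀ i i' : S,
      (T⁻¹ • ∑ j ∈ Finset.Icc 1 k, α j • x j i) - (T⁻¹ • ∑ j ∈ Finset.Icc 1 k, α j • x j i')
      = ∑ j ∈ Finset.Icc 1 k, w j • (x j i - x j i') := by
    intro i i'
    rw [← smul_sub, ← Finset.sum_sub_distrib, Finset.smul_sum]
    exact Finset.sum_congr rfl fun j _ => by rw [← smul_sub, smul_smul]
  have hdiffa : ∀ (i : S) (l : A),
      (T⁻¹ • ∑ j ∈ Finset.Icc 1 k, α j • x j i) - a l
      = ∑ j ∈ Finset.Icc 1 k, w j • (x j i - a l) := by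
    intro i l
    have hal : a l = ∑ j ∈ Finset.Icc 1 k, w j • a l := by
      rw [← Finset.sum_smul, hw1, one_smul]
    conv_lhs => rw [hal, Finset.smul_sum]
    rw [← Finset.sum_sub_distrib]
    exact Finset.sum_congr rfl fun j _ => by rw [smul_smul, ← smul_sub]
  have hR : ∑ j ∈ Finset.Icc 1 k, w j * Γ (x j) σsd σad
      = (∑ p ∈ U, ∑ j ∈ Finset.Icc 1 k,
          w j * (σsd p * (‖x j p.1 - x j p.2‖^2 - d p.1 p.2^2) - σsd p^2/4))
      + ∑ q ∈ Eas, ∑ j ∈ Finset.Icc 1 k,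
          w j * (σad q * (‖x j q.1 - a q.2‖^2 - e q.1 q.2^2) - σad q^2/4) := by
    have h1 : ∀ j ∈ Finset.Icc 1 k, w j * Γ (x j) σsd σad
        = (∑ p ∈ U, w j * (σsd p * (‖x j p.1 - x j p.2‖^2 - d p.1 p.2^2) - σsd p^2/4))
          + ∑ q ∈ Eas, w j * (σad q * (‖x j q.1 - a q.2‖^2 - e q.1 q.2^2) - σad q^2/4) :=
      fun j _ => by rw [hΓ, mul_add, Finset.mul_sum, Finset.mul_sum]
    rw [Finset.sum_congr rfl h1, Finset.sum_add_distrib]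
    congr 1
    · exact Finset.sum_comm
    · exact Finset.sum_comm
  have hR2 : ∑ j ∈ Finset.Icc 1 k, w j * Γ xd (σs j) (σa j)
      = (∑ p ∈ U, ∑ j ∈ Finset.Icc 1 k,
          w j * (σs j p * (‖xd p.1 - xd p.2‖^2 - d p.1 p.2^2) - σs j p^2/4))
      + ∑ q ∈ Eas, ∑ j ∈ Finset.Icc 1 k,
          w j * (σa j q * (‖xd q.1 - a q.2‖^2 - e q.1 q.2^2) - σa j q^2/4) := by
    have h1 : ∀ j ∈ Finset.Icc 1 k, w j * Γ xd (σs j) (σa j)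
        = (∑ p ∈ U, w j * (σs j p * (‖xd p.1 - xd p.2‖^2 - d p.1 p.2^2) - σs j p^2/4))
          + ∑ q ∈ Eas, w j * (σa j q * (‖xd q.1 - a q.2‖^2 - e q.1 q.2^2) - σa j q^2/4) :=
      fun j _ => by rw [hΓ, mul_add, Finset.mul_sum, Finset.mul_sum]
    rw [Finset.sum_congr rfl h1, Finset.sum_add_distrib]
    congr 1
    · exact Finset.sum_comm
    · exact Finset.sum_comm
  have avgx : Γ (fun i => T⁻¹ • ∑ j ∈ Finset.Icc 1 k, α j • x j i) σsd σad
      ≤ ∑ j ∈ Finset.Icc 1 k, w j * Γ (x j) σsd σad := by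
    rw [hR]
    simp only [hΓ]
    refine add_le_add (Finset.sum_le_sum fun p hp => ?_) (Finset.sum_le_sum fun q hq => ?_)
    · rw [hdiff p.1 p.2,
        aux_lin (Finset.Icc 1 k) w (fun j => ‖x j p.1 - x j p.2‖^2) hw1 (σsd p)
          (d p.1 p.2^2) (σsd p^2/4)]
      have hJ := aux_normsq_avg (Finset.Icc 1 k) w (fun j => x j p.1 - x j p.2) hw0 hw1
      have hσ0 : 0 ≤ σsd p := (hσsdB p hp).1
      nlinarith [mul_le_mul_of_nonneg_left hJ hσ0]
    · rw [hdiffa q.1 q.2,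
        aux_lin (Finset.Icc 1 k) w (fun j => ‖x j q.1 - a q.2‖^2) hw1 (σad q)
          (e q.1 q.2^2) (σad q^2/4)]
      have hJ := aux_normsq_avg (Finset.Icc 1 k) w (fun j => x j q.1 - a q.2) hw0 hw1
      have hσ0 : 0 ≤ σad q := (hσadB q hq).1
      nlinarith [mul_le_mul_of_nonneg_left hJ hσ0]
  have hσhs : ∀ p : S × S, (∑ j ∈ Finset.Icc 1 k, α j * σs j p) / T
      = ∑ j ∈ Finset.Icc 1 k, w j * σs j p := by
    intro p
    rw [Finset.sum_div]
    exact Finset.sum_congr rfl fun j _ => by simp only [hwdef]; ring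
  have hσha : ∀ q : S × A, (∑ j ∈ Finset.Icc 1 k, α j * σa j q) / T
      = ∑ j ∈ Finset.Icc 1 k, w j * σa j q := by
    intro q
    rw [Finset.sum_div]
    exact Finset.sum_congr rfl fun j _ => by simp only [hwdef]; ring
  have avgσ : ∑ j ∈ Finset.Icc 1 k, w j * Γ xd (σs j) (σa j)
      ≤ Γ xd (fun p => (∑ j ∈ Finset.Icc 1 k, α j * σs j p) / T)
          (fun q => (∑ j ∈ Finset.Icc 1 k, α j * σa j q) / T) := by
    rw [hR2]
    simp only [hΓ]
    refine add_le_add (Finset.sum_le_sum fun p hp => ?_) (Finset.sum_le_sum fun q hq => ?_)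
    · rw [hσhs p]
      exact aux_conc (Finset.Icc 1 k) w (fun j => σs j p) hw0 hw1
        (‖xd p.1 - xd p.2‖^2 - d p.1 p.2^2)
    · rw [hσha q]
      exact aux_conc (Finset.Icc 1 k) w (fun j => σa j q) hw0 hw1
        (‖xd q.1 - a q.2‖^2 - e q.1 q.2^2)
  have hWsum : ∑ j ∈ Finset.Icc 1 k, w j * (Γ (x j) σsd σad - Γ xd (σs j) (σa j))
      = T⁻¹ * ∑ j ∈ Finset.Icc 1 k, α j * (Γ (x j) σsd σad - Γ xd (σs j) (σa j)) := by
    rw [Finset.mul_sum]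
    exact Finset.sum_congr rfl fun j _ => by simp only [hwdef]; ring
  have hsplitW : ∑ j ∈ Finset.Icc 1 k, w j * (Γ (x j) σsd σad - Γ xd (σs j) (σa j))
      = (∑ j ∈ Finset.Icc 1 k, w j * Γ (x j) σsd σad)
        - ∑ j ∈ Finset.Icc 1 k, w j * Γ xd (σs j) (σa j) := by
    rw [← Finset.sum_sub_distrib]
    exact Finset.sum_congr rfl fun j _ => by ring
  -- arithmetic for the final bound
  have he2 : (k:ℝ) * α0^2 * M₂^2 / 2 = dbar := by
    have hα0sq : α0^2 = 2*dbar / (M₂^2 * (k:ℝ)) := by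
      rw [hα0, div_pow, mul_pow, hs2, hr2]
    rw [hα0sq]
    field_simp
  have hTval : T = Real.sqrt k * Real.sqrt (2*dbar) / M₂ := by
    rw [hT, hα0]
    field_simp
    linear_combination (-1 : ℝ) * hr2
  have hbound : T⁻¹ * (dbar + dbar) = Real.sqrt (2*dbar) * M₂ / Real.sqrt k := by
    rw [hTval]
    rw [inv_div, div_mul_eq_mul_div, div_eq_div_iff (by positivity) (by positivity)]
    linear_combination (-(M₂ * Real.sqrt ↑k)) * hs2
  have hfinal : T⁻¹ * (dbar + (k:ℝ) * α0^2 * M₂^2 / 2)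
      ≤ Real.sqrt (2*dbar) * M₂ / Real.sqrt k := by
    rw [he2, hbound]
  calc Γ (fun i => T⁻¹ • ∑ j ∈ Finset.Icc 1 k, α j • x j i) σsd σad
        - Γ xd (fun p => (∑ j ∈ Finset.Icc 1 k, α j * σs j p) / T)
            (fun q => (∑ j ∈ Finset.Icc 1 k, α j * σa j q) / T)
      ≤ (∑ j ∈ Finset.Icc 1 k, w j * Γ (x j) σsd σad)
          - ∑ j ∈ Finset.Icc 1 k, w j * Γ xd (σs j) (σa j) := by
        have := avgx; have := avgσ; linarith
    _ = T⁻¹ * ∑ j ∈ Finset.Icc 1 k, α j * (Γ (x j) σsd σad - Γ xd (σs j) (σa j)) := by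
        rw [← hsplitW, hWsum]
    _ ≤ T⁻¹ * (dbar + (k:ℝ) * α0^2 * M₂^2 / 2) :=
        mul_le_mul_of_nonneg_left hgapsum (inv_nonneg.2 hTpos.le)
    _ ≤ Real.sqrt (2*dbar) * M₂ / Real.sqrt k := hfinal
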